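/- Let G be a connected graph and T a subset of its vertices with |T| ≥ 2 such that for every x ∈ V(G) \ T, the graph G − x has at least two connected components containing vertices of T. Then the number of vertices of degree at least 3 in G is at most 3(|T| − 2) − |T₌₂|, where T₌₂ is the set of vertices of T that have degree exactly 2 in G. -/

import Mathlib

open Finset SimpleGraph

namespace CritAux

variable {V : Type*} [DecidableEq V]

/-- Connectivity within a finite vertex set `s`: a walk whose support stays in `s`. -/
def ConnIn (G : SimpleGraph V) (s : Finset V) (u v : V) : Prop :=
  ∃ w : G.Walk u v, ∀ z ∈ w.support, z ∈ s

variable {G : SimpleGraph V} {s s' : Finset V} {u v x : V}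

omit [DecidableEq V] in
lemma connIn_refl (h : u ∈ s) : ConnIn G s u u :=
  ⟨SimpleGraph.Walk.nil, by simp [h]⟩

omit [DecidableEq V] in
lemma ConnIn.symm (h : ConnIn G s u v) : ConnIn G s v u := by
  obtain ⟨w, hw⟩ := h
  exact ⟨w.reverse, fun z hz => hw z (by simpa using hz)⟩

omit [DecidableEq V] in
lemma ConnIn.trans {w : V} (h1 : ConnIn G s u v) (h2 : ConnIn G s v w) : ConnIn G s u w := by
  obtain ⟨w1, hw1⟩ := h1
  obtain ⟨w2, hw2⟩ := h2
  refine ⟨w1.append w2, fun z hz => ?_⟩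
  rw [SimpleGraph.Walk.mem_support_append_iff] at hz
  exact hz.elim (hw1 z) (hw2 z)

omit [DecidableEq V] in
lemma ConnIn.mono (hs : s ⊆ s') (h : ConnIn G s u v) : ConnIn G s' u v := by
  obtain ⟨w, hw⟩ := h
  exact ⟨w, fun z hz => hs (hw z hz)⟩

omit [DecidableEq V] in
lemma connIn_adj (h : G.Adj u v) (hu : u ∈ s) (hv : v ∈ s) : ConnIn G s u v :=
  ⟨SimpleGraph.Walk.cons h SimpleGraph.Walk.nil, by
    intro z hz
    simp only [SimpleGraph.Walk.support_cons, SimpleGraph.Walk.support_nil,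
      List.mem_cons, List.mem_singleton] at hz
    rcases hz with rfl | rfl | h
    · exact hu
    · exact hv
    · exact absurd h List.not_mem_nil⟩

lemma good_walk (S : Finset V) :
    ∀ {u x : V} (w : G.Walk u x), (∀ z ∈ w.support, z ∈ S) → u ≠ x →
      ∃ w' : G.Walk u x, ∀ z ∈ w'.support,
        z = x ∨ (z ∈ S.erase x ∧ ConnIn G (S.erase x) u z) := by
  intro u x w
  induction w with
  | nil => exact fun _ h => absurd rfl h
  | @cons a b c hadj p ih =>
    intro hsup hac
    have haS : a ∈ S := hsup a (by simp)
    have haSe : a ∈ S.erase c := Finset.mem_erase.mpr ⟨hac, haS⟩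
    by_cases hbc : b = c
    · subst hbc
      refine ⟨SimpleGraph.Walk.cons hadj SimpleGraph.Walk.nil, ?_⟩
      intro z hz
      simp only [SimpleGraph.Walk.support_cons, SimpleGraph.Walk.support_nil,
        List.mem_cons, List.mem_singleton] at hz
      rcases hz with rfl | rfl | h
      · exact Or.inr ⟨haSe, connIn_refl haSe⟩
      · exact Or.inl rfl
      · exact absurd h List.not_mem_nil
    · have hbS : b ∈ S := hsup b (by simp)
      have hbSe : b ∈ S.erase c := Finset.mem_erase.mpr ⟨hbc, hbS⟩
      obtain ⟨w', hw'⟩ := ih (fun z hz => hsup z (by simp [hz])) hbc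
      have hedge : ConnIn G (S.erase c) a b := connIn_adj hadj haSe hbSe
      refine ⟨SimpleGraph.Walk.cons hadj w', ?_⟩
      intro z hz
      rw [SimpleGraph.Walk.support_cons] at hz
      rcases List.mem_cons.mp hz with rfl | hz
      · exact Or.inr ⟨haSe, connIn_refl haSe⟩
      · rcases hw' z hz with rfl | ⟨hze, hcz⟩
        · exact Or.inl rfl
        · exact Or.inr ⟨hze, hedge.trans hcz⟩

omit [DecidableEq V] in
lemma reachable_induce_of_walk {s : Set V} :
    ∀ {a b : V} (w : G.Walk a b) (_ : ∀ z ∈ w.support, z ∈ s) (ha : a ∈ s) (hb : b ∈ s),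
      (G.induce s).Reachable ⟨a, ha⟩ ⟨b, hb⟩ := by
  intro a b w
  induction w with
  | nil => exact fun _ ha hb => by rfl
  | @cons a b c hadj p ih =>
    intro hsup ha hc
    have hb : b ∈ s := hsup b (by simp)
    have hstep : (G.induce s).Adj ⟨a, ha⟩ ⟨b, hb⟩ := by
      simp only [comap_adj, Function.Embedding.coe_subtype]
      exact hadj
    exact hstep.reachable.trans (ih (fun z hz => hsup z (by simp [hz])) hb hc)

/-- Degree of `v` into the set `s`. -/
def degIn (G : SimpleGraph V) [DecidableRel G.Adj] (s : Finset V) (v : V) : ℕ :=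
  (s.filter (fun w => G.Adj v w)).card

variable [DecidableRel G.Adj]

lemma degIn_le_of_mem {s : Finset V} {v : V} (hv : v ∈ s) : degIn G s v ≤ s.card - 1 := by
  have h : s.filter (fun w => G.Adj v w) ⊆ s.erase v := by
    intro z hz
    rw [Finset.mem_filter] at hz
    exact Finset.mem_erase.mpr ⟨hz.2.ne', hz.1⟩
  calc degIn G s v ≤ (s.erase v).card := Finset.card_le_card h
    _ = s.card - 1 := Finset.card_erase_of_mem hv

lemma card_filter_insert {s : Finset V} {x : V} (hx : x ∉ s) (p : V → Prop) [DecidablePred p] :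
    ((insert x s).filter p).card = (if p x then 1 else 0) + (s.filter p).card := by
  rw [Finset.filter_insert]
  split_ifs with h
  · rw [Finset.card_insert_of_notMem (fun hc => hx (Finset.filter_subset _ _ hc))]
    omega
  · omega

lemma card_filter_split {s : Finset V} {x : V} (hx : x ∈ s) (p : V → Prop) [DecidablePred p] :
    (s.filter p).card = (if p x then 1 else 0) + ((s.erase x).filter p).card := by
  conv_lhs => rw [← Finset.insert_erase hx]
  exact card_filter_insert (Finset.notMem_erase x s) p

lemma card_filter_union_split {s t : Finset V} (hts : t ⊆ s) (p : V → Prop) [DecidablePred p] :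
    (s.filter p).card = (t.filter p).card + ((s \ t).filter p).card := by
  conv_lhs => rw [← Finset.union_sdiff_of_subset hts]
  rw [Finset.filter_union]
  exact Finset.card_union_of_disjoint (Finset.disjoint_filter_filter Finset.disjoint_sdiff)

/-- Main auxiliary lemma, by strong induction on the size of the active vertex set `S`. -/
lemma aux (G : SimpleGraph V) [DecidableRel G.Adj] :
    ∀ (n : ℕ) (S T : Finset V), S.card ≤ n → T ⊆ S → 2 ≤ T.card →
    (∀ u ∈ S, ∀ v ∈ S, ConnIn G S u v) →
    (∀ x ∈ S, x ∉ T → ∃ t₁ ∈ T, ∃ t₂ ∈ T, ¬ ConnIn G (S.erase x) t₁ t₂) →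
    (S.filter (fun v => 3 ≤ degIn G S v)).card
      + (T.filter (fun t => degIn G S t = 2)).card + 6 ≤ 3 * T.card := by
  intro n
  induction n with
  | zero =>
    intro S T hSn hTS hT _ _
    have := Finset.card_le_card hTS
    omega
  | succ n ih =>
    intro S T hSn hTS hT hconn hcrit
    by_cases hST : ∀ y ∈ S, y ∈ T
    · -- base case : T = S
      have hTeq : T = S := Finset.Subset.antisymm hTS (fun y hy => hST y hy)
      subst hTeq
      have hdisj : Disjoint (T.filter (fun v => 3 ≤ degIn G T v))
          (T.filter (fun t => degIn G T t = 2)) := by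
        rw [Finset.disjoint_left]
        intro a ha hb
        rw [Finset.mem_filter] at ha hb
        omega
      have hsum : (T.filter (fun v => 3 ≤ degIn G T v)).card
          + (T.filter (fun t => degIn G T t = 2)).card ≤ T.card := by
        rw [← Finset.card_union_of_disjoint hdisj]
        exact Finset.card_le_card (Finset.union_subset (Finset.filter_subset _ _)
          (Finset.filter_subset _ _))
      by_cases h3 : 3 ≤ T.card
      · omega
      · have hdeg : ∀ v ∈ T, degIn G T v ≤ 1 := by
          intro v hv
          have := degIn_le_of_mem (G := G) hv
          omega
        have e1 : T.filter (fun v => 3 ≤ degIn G T v) = ∅ := by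
          rw [Finset.filter_eq_empty_iff]
          intro v hv
          have := hdeg v hv
          omega
        have e2 : T.filter (fun t => degIn G T t = 2) = ∅ := by
          rw [Finset.filter_eq_empty_iff]
          intro v hv
          have := hdeg v hv
          omega
        rw [e1, e2]
        simp only [Finset.card_empty]
        omega
    · push_neg at hST
      obtain ⟨x, hxS, hxT⟩ := hST
      obtain ⟨t₁, ht₁T, t₂, ht₂T, hsep⟩ := hcrit x hxS hxT
      have ht₁S : t₁ ∈ S := hTS ht₁T
      have ht₂S : t₂ ∈ S := hTS ht₂T
      have ht₁x : t₁ ≠ x := fun h => hxT (h ▸ ht₁T)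
      have ht₂x : t₂ ≠ x := fun h => hxT (h ▸ ht₂T)
      have ht₁Se : t₁ ∈ S.erase x := Finset.mem_erase.mpr ⟨ht₁x, ht₁S⟩
      have ht₂Se : t₂ ∈ S.erase x := Finset.mem_erase.mpr ⟨ht₂x, ht₂S⟩
      haveI : DecidablePred (fun z => ConnIn G (S.erase x) t₁ z) := Classical.decPred _
      set C1 : Finset V := (S.erase x).filter (fun z => ConnIn G (S.erase x) t₁ z) with hC1def
      have memC1 : ∀ {z : V}, z ∈ C1 ↔ z ∈ S.erase x ∧ ConnIn G (S.erase x) t₁ z := by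
        intro z; rw [hC1def, Finset.mem_filter]
      have ht₁C1 : t₁ ∈ C1 := memC1.mpr ⟨ht₁Se, connIn_refl ht₁Se⟩
      have ht₂C1 : t₂ ∉ C1 := fun h => hsep (memC1.mp h).2
      have hxC1 : x ∉ C1 := fun h => (Finset.mem_erase.mp (memC1.mp h).1).1 rfl
      have hC1S : C1 ⊆ S := fun z hz => Finset.mem_of_mem_erase (memC1.mp hz).1
      set S1 : Finset V := insert x C1 with hS1def
      set S2 : Finset V := S \ C1 with hS2def
      have hxS2 : x ∈ S2 := Finset.mem_sdiff.mpr ⟨hxS, hxC1⟩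
      have hS1S : S1 ⊆ S := by
        rw [hS1def]; exact Finset.insert_subset hxS hC1S
      have hS2S : S2 ⊆ S := Finset.sdiff_subset
      -- good walks to x
      have key : ∀ u ∈ S, u ≠ x → ∃ w : G.Walk u x, ∀ z ∈ w.support,
          z = x ∨ (z ∈ S.erase x ∧ ConnIn G (S.erase x) u z) := by
        intro u hu hux
        obtain ⟨w, hw⟩ := hconn u hu x hxS
        exact good_walk S w hw hux
      -- every vertex of S1 connects to x inside S1
      have hg1 : ∀ u ∈ S1, ConnIn G S1 u x := by
        intro u hu
        rcases Finset.mem_insert.mp hu with rfl | huC1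
        · exact connIn_refl (Finset.mem_insert_self _ _)
        · have ht₁u : ConnIn G (S.erase x) t₁ u := (memC1.mp huC1).2
          have hux : u ≠ x := (Finset.mem_erase.mp (memC1.mp huC1).1).1
          obtain ⟨w, hw⟩ := key u (hC1S huC1) hux
          refine ⟨w, fun z hz => ?_⟩
          rcases hw z hz with rfl | ⟨hze, hcz⟩
          · exact Finset.mem_insert_self _ _
          · exact Finset.mem_insert_of_mem (memC1.mpr ⟨hze, ht₁u.trans hcz⟩)
      have conn1 : ∀ u ∈ S1, ∀ v ∈ S1, ConnIn G S1 u v :=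
        fun u hu v hv => (hg1 u hu).trans (hg1 v hv).symm
      -- every vertex of S2 connects to x inside S2
      have hg2 : ∀ u ∈ S2, ConnIn G S2 u x := by
        intro u hu
        by_cases hux : u = x
        · subst hux; exact connIn_refl hxS2
        · have huC1 : u ∉ C1 := (Finset.mem_sdiff.mp hu).2
          have huS : u ∈ S := (Finset.mem_sdiff.mp hu).1
          obtain ⟨w, hw⟩ := key u huS hux
          refine ⟨w, fun z hz => ?_⟩
          rcases hw z hz with rfl | ⟨hze, hcz⟩
          · exact hxS2
          · refine Finset.mem_sdiff.mpr ⟨Finset.mem_of_mem_erase hze, fun hzC1 => huC1 ?_⟩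
            exact memC1.mpr ⟨Finset.mem_erase.mpr ⟨hux, huS⟩,
              (memC1.mp hzC1).2.trans hcz.symm⟩
      have conn2 : ∀ u ∈ S2, ∀ v ∈ S2, ConnIn G S2 u v :=
        fun u hu v hv => (hg2 u hu).trans (hg2 v hv).symm
      -- target sets
      set T1 : Finset V := insert x (T ∩ C1) with hT1def
      set T2 : Finset V := insert x (T \ C1) with hT2def
      have hxTC1 : x ∉ T ∩ C1 := fun h => hxT (Finset.mem_inter.mp h).1
      have hxTC1' : x ∉ T \ C1 := fun h => hxT (Finset.mem_sdiff.mp h).1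
      have hT1card : T1.card = (T ∩ C1).card + 1 := by
        rw [hT1def, Finset.card_insert_of_notMem hxTC1]
      have hT2card : T2.card = (T \ C1).card + 1 := by
        rw [hT2def, Finset.card_insert_of_notMem hxTC1']
      have hTsplit : (T ∩ C1).card + (T \ C1).card = T.card :=
        Finset.card_inter_add_card_sdiff T C1
      have hT1S1 : T1 ⊆ S1 := by
        rw [hT1def, hS1def]
        exact Finset.insert_subset_insert x ((Finset.inter_subset_right).trans
          (Finset.Subset.refl C1))
      have hT2S2 : T2 ⊆ S2 := by
        rw [hT2def]
        refine Finset.insert_subset hxS2 ?_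
        intro t ht
        exact Finset.mem_sdiff.mpr ⟨hTS (Finset.mem_sdiff.mp ht).1, (Finset.mem_sdiff.mp ht).2⟩
      have ht₁TC1 : t₁ ∈ T ∩ C1 := Finset.mem_inter.mpr ⟨ht₁T, ht₁C1⟩
      have ht₂TC1 : t₂ ∈ T \ C1 := Finset.mem_sdiff.mpr ⟨ht₂T, ht₂C1⟩
      have hT1two : 2 ≤ T1.card := by
        have : 0 < (T ∩ C1).card := Finset.card_pos.mpr ⟨t₁, ht₁TC1⟩
        omega
      have hT2two : 2 ≤ T2.card := by
        have : 0 < (T \ C1).card := Finset.card_pos.mpr ⟨t₂, ht₂TC1⟩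
        omega
      have hS1lt : S1.card < S.card := by
        refine Finset.card_lt_card ((Finset.ssubset_iff_of_subset hS1S).mpr ⟨t₂, ht₂S, ?_⟩)
        intro h
        rcases Finset.mem_insert.mp h with h' | h'
        · exact ht₂x h'
        · exact ht₂C1 h'
      have hS2lt : S2.card < S.card := by
        refine Finset.card_lt_card ((Finset.ssubset_iff_of_subset hS2S).mpr ⟨t₁, ht₁S, ?_⟩)
        intro h
        exact (Finset.mem_sdiff.mp h).2 ht₁C1
      -- criticality for the pieces
      have crit1 : ∀ y ∈ S1, y ∉ T1 → ∃ a ∈ T1, ∃ b ∈ T1, ¬ ConnIn G (S1.erase y) a b := by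
        intro y hyS1 hyT1
        have hyx : y ≠ x := fun e => hyT1 (e ▸ Finset.mem_insert_self _ _)
        have hyC1 : y ∈ C1 := (Finset.mem_insert.mp hyS1).resolve_left hyx
        have hyT : y ∉ T := fun h =>
          hyT1 (Finset.mem_insert_of_mem (Finset.mem_inter.mpr ⟨h, hyC1⟩))
        have hyS : y ∈ S := hC1S hyC1
        obtain ⟨a, haT, b, hbT, hab⟩ := hcrit y hyS hyT
        have bridge : ∀ t ∈ T, t ∉ C1 → ConnIn G (S.erase y) t x := by
          intro t htT htC1
          have htx : t ≠ x := fun e => hxT (e ▸ htT)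
          obtain ⟨w, hw⟩ := key t (hTS htT) htx
          refine ⟨w, fun z hz => ?_⟩
          rcases hw z hz with rfl | ⟨hze, hcz⟩
          · exact Finset.mem_erase.mpr ⟨hyx.symm, hxS⟩
          · refine Finset.mem_erase.mpr ⟨?_, Finset.mem_of_mem_erase hze⟩
            rintro rfl
            exact htC1 (memC1.mpr ⟨Finset.mem_erase.mpr ⟨htx, hTS htT⟩,
              (memC1.mp hyC1).2.trans hcz.symm⟩)
        have bridge1 : ∀ t ∈ T, ConnIn G (S.erase y) t (if t ∈ C1 then t else x) := by
          intro t htT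
          split_ifs with h
          · exact connIn_refl (Finset.mem_erase.mpr ⟨fun e => hyT (e ▸ htT), hTS htT⟩)
          · exact bridge t htT h
        refine ⟨(if a ∈ C1 then a else x), ?_, (if b ∈ C1 then b else x), ?_, ?_⟩
        · split_ifs with h
          · exact Finset.mem_insert_of_mem (Finset.mem_inter.mpr ⟨haT, h⟩)
          · exact Finset.mem_insert_self _ _
        · split_ifs with h
          · exact Finset.mem_insert_of_mem (Finset.mem_inter.mpr ⟨hbT, h⟩)
          · exact Finset.mem_insert_self _ _
        · intro hcon
          have hcon' : ConnIn G (S.erase y) (if a ∈ C1 then a else x) (if b ∈ C1 then b else x) :=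
            hcon.mono (Finset.erase_subset_erase _ hS1S)
          exact hab (((bridge1 a haT).trans hcon').trans (bridge1 b hbT).symm)
      have crit2 : ∀ y ∈ S2, y ∉ T2 → ∃ a ∈ T2, ∃ b ∈ T2, ¬ ConnIn G (S2.erase y) a b := by
        intro y hyS2 hyT2
        have hyx : y ≠ x := fun e => hyT2 (e ▸ Finset.mem_insert_self _ _)
        have hyC1 : y ∉ C1 := (Finset.mem_sdiff.mp hyS2).2
        have hyS : y ∈ S := (Finset.mem_sdiff.mp hyS2).1
        have hyT : y ∉ T := fun h =>
          hyT2 (Finset.mem_insert_of_mem (Finset.mem_sdiff.mpr ⟨h, hyC1⟩))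
        obtain ⟨a, haT, b, hbT, hab⟩ := hcrit y hyS hyT
        have bridge : ∀ t ∈ T, t ∈ C1 → ConnIn G (S.erase y) t x := by
          intro t htT htC1
          have htx : t ≠ x := fun e => hxT (e ▸ htT)
          obtain ⟨w, hw⟩ := key t (hTS htT) htx
          refine ⟨w, fun z hz => ?_⟩
          rcases hw z hz with rfl | ⟨hze, hcz⟩
          · exact Finset.mem_erase.mpr ⟨hyx.symm, hxS⟩
          · refine Finset.mem_erase.mpr ⟨?_, Finset.mem_of_mem_erase hze⟩
            rintro rfl
            exact hyC1 (memC1.mpr ⟨Finset.mem_erase.mpr ⟨hyx, hyS⟩,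
              ((memC1.mp htC1).2).trans hcz⟩)
        have bridge2 : ∀ t ∈ T, ConnIn G (S.erase y) t (if t ∈ C1 then x else t) := by
          intro t htT
          split_ifs with h
          · exact bridge t htT h
          · exact connIn_refl (Finset.mem_erase.mpr ⟨fun e => hyT (e ▸ htT), hTS htT⟩)
        refine ⟨(if a ∈ C1 then x else a), ?_, (if b ∈ C1 then x else b), ?_, ?_⟩
        · split_ifs with h
          · exact Finset.mem_insert_self _ _
          · exact Finset.mem_insert_of_mem (Finset.mem_sdiff.mpr ⟨haT, h⟩)
        · split_ifs with h
          · exact Finset.mem_insert_self _ _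
          · exact Finset.mem_insert_of_mem (Finset.mem_sdiff.mpr ⟨hbT, h⟩)
        · intro hcon
          have hcon' : ConnIn G (S.erase y) (if a ∈ C1 then x else a) (if b ∈ C1 then x else b) :=
            hcon.mono (Finset.erase_subset_erase _ hS2S)
          exact hab (((bridge2 a haT).trans hcon').trans (bridge2 b hbT).symm)
      -- apply the induction hypothesis
      have IH1 := ih S1 T1 (by omega) hT1S1 hT1two conn1 crit1
      have IH2 := ih S2 T2 (by omega) hT2S2 hT2two conn2 crit2
      -- degrees agree
      have hdeg1 : ∀ u ∈ C1, degIn G S1 u = degIn G S u := by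
        intro u hu
        unfold degIn
        congr 1
        apply Finset.Subset.antisymm (Finset.filter_subset_filter _ hS1S)
        intro z hz
        rw [Finset.mem_filter] at hz ⊢
        refine ⟨?_, hz.2⟩
        by_cases hzx : z = x
        · subst hzx; exact Finset.mem_insert_self _ _
        · have huSe : u ∈ S.erase x := (memC1.mp hu).1
          refine Finset.mem_insert_of_mem (memC1.mpr ⟨Finset.mem_erase.mpr ⟨hzx, hz.1⟩, ?_⟩)
          exact (memC1.mp hu).2.trans (connIn_adj hz.2 huSe (Finset.mem_erase.mpr ⟨hzx, hz.1⟩))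
      have hdeg2 : ∀ u ∈ S2, u ≠ x → degIn G S2 u = degIn G S u := by
        intro u hu hux
        have huS : u ∈ S := (Finset.mem_sdiff.mp hu).1
        have huC1 : u ∉ C1 := (Finset.mem_sdiff.mp hu).2
        unfold degIn
        congr 1
        apply Finset.Subset.antisymm (Finset.filter_subset_filter _ hS2S)
        intro z hz
        rw [Finset.mem_filter] at hz ⊢
        refine ⟨Finset.mem_sdiff.mpr ⟨hz.1, fun hzC1 => ?_⟩, hz.2⟩
        by_cases hzx : z = x
        · exact hxC1 (hzx ▸ hzC1)
        · exact huC1 (memC1.mpr ⟨Finset.mem_erase.mpr ⟨hux, huS⟩,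
            (memC1.mp hzC1).2.trans (connIn_adj hz.2 (Finset.mem_erase.mpr ⟨hux, huS⟩)
              (Finset.mem_erase.mpr ⟨hzx, hz.1⟩)).symm⟩)
      -- degree of x splits
      have hdeg3 : degIn G S1 x + degIn G S2 x = degIn G S x := by
        have h1 : degIn G S1 x = (C1.filter (fun w => G.Adj x w)).card := by
          show ((insert x C1).filter (fun w => G.Adj x w)).card = _
          rw [Finset.filter_insert, if_neg (G.irrefl)]
        have h2 : degIn G S x = (C1.filter (fun w => G.Adj x w)).card
            + ((S \ C1).filter (fun w => G.Adj x w)).card :=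
          card_filter_union_split hC1S _
        rw [h1, h2]
        rfl
      -- counting decompositions
      have hC1A : C1.filter (fun v => 3 ≤ degIn G S v)
          = C1.filter (fun v => 3 ≤ degIn G S1 v) :=
        Finset.filter_congr (fun u hu => by rw [hdeg1 u hu])
      have hS2'A : (S2.erase x).filter (fun v => 3 ≤ degIn G S v)
          = (S2.erase x).filter (fun v => 3 ≤ degIn G S2 v) :=
        Finset.filter_congr (fun u hu => by
          rw [hdeg2 u (Finset.mem_of_mem_erase hu) (Finset.mem_erase.mp hu).1])
      have E1 : (S.filter (fun v => 3 ≤ degIn G S v)).card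
          = (C1.filter (fun v => 3 ≤ degIn G S1 v)).card
            + ((if 3 ≤ degIn G S x then 1 else 0)
              + ((S2.erase x).filter (fun v => 3 ≤ degIn G S2 v)).card) := by
        rw [card_filter_union_split hC1S (fun v => 3 ≤ degIn G S v), hC1A,
          card_filter_split hxS2 (fun v => 3 ≤ degIn G S v), hS2'A]
      have hb1 : (T ∩ C1).filter (fun t => degIn G S t = 2)
          = (T ∩ C1).filter (fun t => degIn G S1 t = 2) :=
        Finset.filter_congr (fun u hu => by rw [hdeg1 u (Finset.mem_inter.mp hu).2])
      have hb2 : (T \ C1).filter (fun t => degIn G S t = 2)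
          = (T \ C1).filter (fun t => degIn G S2 t = 2) :=
        Finset.filter_congr (fun u hu => by
          have h1 : u ∈ S2 := Finset.mem_sdiff.mpr
            ⟨hTS (Finset.mem_sdiff.mp hu).1, (Finset.mem_sdiff.mp hu).2⟩
          have h2 : u ≠ x := fun e => hxT (e ▸ (Finset.mem_sdiff.mp hu).1)
          rw [hdeg2 u h1 h2])
      have E2 : (T.filter (fun t => degIn G S t = 2)).card
          = ((T ∩ C1).filter (fun t => degIn G S1 t = 2)).card
            + ((T \ C1).filter (fun t => degIn G S2 t = 2)).card := by
        rw [card_filter_union_split (Finset.inter_subset_left) (fun t => degIn G S t = 2),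
          Finset.sdiff_inter_self_left, hb1, hb2]
      have E3 : (S1.filter (fun v => 3 ≤ degIn G S1 v)).card
          = (if 3 ≤ degIn G S1 x then 1 else 0)
            + (C1.filter (fun v => 3 ≤ degIn G S1 v)).card := by
        rw [hS1def]
        exact card_filter_insert hxC1 _
      have E4 : (S2.filter (fun v => 3 ≤ degIn G S2 v)).card
          = (if 3 ≤ degIn G S2 x then 1 else 0)
            + ((S2.erase x).filter (fun v => 3 ≤ degIn G S2 v)).card :=
        card_filter_split hxS2 _
      have E5 : (T1.filter (fun t => degIn G S1 t = 2)).card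
          = (if degIn G S1 x = 2 then 1 else 0)
            + ((T ∩ C1).filter (fun t => degIn G S1 t = 2)).card := by
        rw [hT1def]
        exact card_filter_insert hxTC1 _
      have E6 : (T2.filter (fun t => degIn G S2 t = 2)).card
          = (if degIn G S2 x = 2 then 1 else 0)
            + ((T \ C1).filter (fun t => degIn G S2 t = 2)).card := by
        rw [hT2def]
        exact card_filter_insert hxTC1' _
      -- key indicator inequality
      have hkey : (if 3 ≤ degIn G S x then 1 else 0)
          ≤ ((if 3 ≤ degIn G S1 x then 1 else 0) + (if degIn G S1 x = 2 then 1 else 0))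
            + ((if 3 ≤ degIn G S2 x then 1 else 0) + (if degIn G S2 x = 2 then 1 else 0)) := by
        have := hdeg3
        split_ifs <;> omega
      rw [E1, E2]
      rw [E3, E5] at IH1
      rw [E4, E6] at IH2
      rw [hT1card] at IH1
      rw [hT2card] at IH2
      generalize (if 3 ≤ degIn G S x then 1 else 0) = i0 at hkey E1 ⊢
      generalize (if 3 ≤ degIn G S1 x then 1 else 0) = i1 at hkey IH1
      generalize (if degIn G S1 x = 2 then 1 else 0) = i2 at hkey IH1
      generalize (if 3 ≤ degIn G S2 x then 1 else 0) = i3 at hkey IH2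
      generalize (if degIn G S2 x = 2 then 1 else 0) = i4 at hkey IH2
      omega

end CritAux

open CritAux in
/-- Under the same hypotheses as Statement 0, the number of vertices of degree
at least 3 is at most `3(|T| − 2) − |T₌₂|`, where `T₌₂` is the set of vertices of `T` of
degree exactly 2 in `G`. -/
theorem stmt1 {V : Type*} [Fintype V] [DecidableEq V]
    (G : SimpleGraph V) [DecidableRel G.Adj] (T : Finset V)
    (hconn : G.Connected) (hT : 2 ≤ T.card)
    (hcrit : ∀ x : V, x ∉ T →
      ∃ t₁ t₂ : ({v : V | v ≠ x} : Set V), (t₁ : V) ∈ T ∧ (t₂ : V) ∈ T ∧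
        ¬ (SimpleGraph.induce {v : V | v ≠ x} G).Reachable t₁ t₂) :
    (Finset.univ.filter fun v => 3 ≤ G.degree v).card ≤
      3 * (T.card - 2) - (T.filter fun t => G.degree t = 2).card := by
  classical
  have hdeg : ∀ v : V, degIn G Finset.univ v = G.degree v := by
    intro v
    unfold degIn
    rw [SimpleGraph.degree]
    congr 1
    ext w
    simp [SimpleGraph.mem_neighborFinset]
  have hconn' : ∀ u ∈ (Finset.univ : Finset V), ∀ v ∈ (Finset.univ : Finset V),
      ConnIn G Finset.univ u v := by
    intro u _ v _
    obtain ⟨w⟩ := hconn.preconnected u v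
    exact ⟨w, fun z _ => Finset.mem_univ z⟩
  have hcrit' : ∀ x ∈ (Finset.univ : Finset V), x ∉ T →
      ∃ t₁ ∈ T, ∃ t₂ ∈ T, ¬ ConnIn G (Finset.univ.erase x) t₁ t₂ := by
    intro x _ hxT
    obtain ⟨t₁, t₂, m1, m2, hnr⟩ := hcrit x hxT
    refine ⟨t₁, m1, t₂, m2, fun hc => hnr ?_⟩
    obtain ⟨w, hw⟩ := hc
    have hsup : ∀ z ∈ w.support, z ∈ ({v : V | v ≠ x} : Set V) := by
      intro z hz
      exact (Finset.mem_erase.mp (hw z hz)).1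
    have := reachable_induce_of_walk (s := ({v : V | v ≠ x} : Set V)) w hsup
      (hsup _ w.start_mem_support) (hsup _ w.end_mem_support)
    rwa [Subtype.coe_eta, Subtype.coe_eta] at this
  have main := aux G (Finset.univ : Finset V).card Finset.univ T le_rfl
    (Finset.subset_univ T) hT hconn' hcrit'
  have eA : Finset.univ.filter (fun v => 3 ≤ degIn G Finset.univ v)
      = Finset.univ.filter (fun v => 3 ≤ G.degree v) :=
    Finset.filter_congr (fun v _ => by rw [hdeg v])
  have eB : T.filter (fun t => degIn G Finset.univ t = 2)
      = T.filter (fun t => G.degree t = 2) :=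
    Finset.filter_congr (fun v _ => by rw [hdeg v])
  rw [eA, eB] at main
  omega
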